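/- [Modular law, second case] Let h ∈ H_n and 1 ≤ j < n. Suppose h(j+1) = h(j)+1, h(j) > j, and no i ∈ [n] satisfies h(i) = j. Define h^+, h^− ∈ H_n by: h^+(i) = h(i) for i ≠ j and h^+(j) = h(j)+1; h^−(i) = h(i) for i ≠ j+1 and h^−(j+1) = h(j). Then for every N ≥ 1, (1+q) · csf_q^N(h) = csf_q^N(h^+) + q · csf_q^N(h^−). (This is Proposition 64(2), eq. (70), expressed via chromatic quasisymmetric functions using the paper's Shareshian–Wachs theorem.) -/

import Mathlib

namespace GenHess

open scoped Classical

noncomputable section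

/-- The vertex set `I ∪ {n}` of the weighted graph of a generalized Hessenberg function. -/
def verts (n : ℕ) (I : Finset ℕ) : Finset ℕ := insert n I

/-- `h : I ∪ {n} → I ∪ {n}` is a generalized Hessenberg function for `(I, n)`,
with `I ⊆ {1, …, n-1}`, `h i ≥ i`, and `h` weakly increasing on `I ∪ {n}`. -/
def IsGenHess (n : ℕ) (I : Finset ℕ) (h : ℕ → ℕ) : Prop :=
  (∀ i ∈ I, 1 ≤ i ∧ i ≤ n - 1) ∧
  (∀ i ∈ verts n I, h i ∈ verts n I) ∧
  (∀ i ∈ verts n I, i ≤ h i) ∧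
  (∀ i ∈ verts n I, ∀ j ∈ verts n I, i ≤ j → h i ≤ h j)

/-- The weight `w_h(i_k) = i_k - i_{k-1}` of a vertex: `v` minus the largest vertex
below `v` (or `0` if there is none). -/
def wt (n : ℕ) (I : Finset ℕ) (v : ℕ) : ℕ :=
  v - ((verts n I).filter (fun u => u < v)).sup id

/-- A proper coloring of the weighted graph `(Γ_h, w_h)` with colors in `[N]`:
each vertex `v` gets a set of colors of size `w_h(v)`, and adjacent vertices get
disjoint color sets (there is an edge `{i,j}` whenever `i < j ≤ h i`). -/
def IsProper {N : ℕ} (n : ℕ) (I : Finset ℕ) (h : ℕ → ℕ)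
    (γ : {x // x ∈ verts n I} → Finset (Fin N)) : Prop :=
  (∀ v : {x // x ∈ verts n I}, (γ v).card = wt n I v.val) ∧
  ∀ v u : {x // x ∈ verts n I}, v.val < u.val → u.val ≤ h v.val → Disjoint (γ v) (γ u)

/-- The ascent statistic `asc_h(γ) = Σ_{edges i<j} #{(a,b) ∈ γ(i)×γ(j) : a < b}`. -/
def asc {N : ℕ} (n : ℕ) (I : Finset ℕ) (h : ℕ → ℕ)
    (γ : {x // x ∈ verts n I} → Finset (Fin N)) : ℕ :=
  ∑ v : {x // x ∈ verts n I}, ∑ u : {x // x ∈ verts n I},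
    if v.val < u.val ∧ u.val ≤ h v.val then
      ((γ v ×ˢ γ u).filter fun ab => ab.1 < ab.2).card
    else 0

/-- The truncated chromatic quasisymmetric function `csf_q^N(h)`, as an element of
`ℤ[x_1,…,x_N][q]` (the outer `Polynomial.X` is `q`). -/
def csf (n : ℕ) (I : Finset ℕ) (h : ℕ → ℕ) (N : ℕ) :
    Polynomial (MvPolynomial (Fin N) ℤ) :=
  ∑ γ ∈ Finset.univ.filter
      (fun γ : {x // x ∈ verts n I} → Finset (Fin N) => IsProper n I h γ),
    Polynomial.C (∏ v : {x // x ∈ verts n I}, ∏ a ∈ γ v, MvPolynomial.X a) *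
      Polynomial.X ^ asc n I h γ

/-- The `q`-integer `[m]_q = 1 + q + ⋯ + q^{m-1}`. -/
def qNum (R : Type) [CommRing R] (m : ℕ) : Polynomial R :=
  ∑ i ∈ Finset.range m, Polynomial.X ^ i

/-- The `q`-factorial `[m]_q!`. -/
def qFact (R : Type) [CommRing R] : ℕ → Polynomial R
  | 0 => 1
  | m + 1 => qNum R (m + 1) * qFact R m

/-- The elementary symmetric polynomial `e_m(x_1,…,x_N)`, viewed as a constant
polynomial in `q`. -/
def esym (N m : ℕ) : Polynomial (MvPolynomial (Fin N) ℤ) :=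
  Polynomial.C (MvPolynomial.esymm (Fin N) ℤ m)

end

end GenHess

open GenHess

set_option maxHeartbeats 2000000 in
lemma qident {R : Type*} [CommRing R] (q P : R) (a b c : ℕ) (hab : a ≠ b)
    (A A' : ℕ)
    (hAA : A' + (if a < b then 1 else 0) = A + (if b < a then 1 else 0)) :
    ((1 + q) * (if b ≠ c then P * q ^ (A + (if b < c then 1 else 0)) else 0)
      - ((if b ≠ c ∧ a ≠ c then
            P * q ^ (A + (if b < c then 1 else 0) + (if a < c then 1 else 0)) else 0)
         + q * (P * q ^ A)))
    + ((1 + q) * (if a ≠ c then P * q ^ (A' + (if a < c then 1 else 0)) else 0)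
      - ((if a ≠ c ∧ b ≠ c then
            P * q ^ (A' + (if a < c then 1 else 0) + (if b < c then 1 else 0)) else 0)
         + q * (P * q ^ A'))) = 0 := by
  rcases lt_trichotomy a b with hab' | hab' | hab'
  · have hA : A = A' + 1 := by
      simp only [if_pos hab', if_neg (lt_asymm hab')] at hAA; omega
    subst hA
    rcases lt_trichotomy c a with h1 | rfl | h1 <;>
      rcases lt_trichotomy c b with h2 | rfl | h2 <;>
      split_ifs <;> first | (exfalso; omega) | ring
  · exact absurd hab' hab
  · have hA : A' = A + 1 := by
      simp only [if_pos hab', if_neg (lt_asymm hab')] at hAA; omega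
    subst hA
    rcases lt_trichotomy c a with h1 | rfl | h1 <;>
      rcases lt_trichotomy c b with h2 | rfl | h2 <;>
      split_ifs <;> first | (exfalso; omega) | ring

lemma qidentF {R : Type*} [CommRing R] (q P : R) {N : ℕ} (a b c : Fin N) (hab : a ≠ b)
    (A A' : ℕ)
    (hAA : A' + (if a < b then 1 else 0) = A + (if b < a then 1 else 0)) :
    ((1 + q) * (if b ≠ c then P * q ^ (A + (if b < c then 1 else 0)) else 0)
      - ((if b ≠ c ∧ a ≠ c then
            P * q ^ (A + (if b < c then 1 else 0) + (if a < c then 1 else 0)) else 0)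
         + q * (P * q ^ A)))
    + ((1 + q) * (if a ≠ c then P * q ^ (A' + (if a < c then 1 else 0)) else 0)
      - ((if a ≠ c ∧ b ≠ c then
            P * q ^ (A' + (if a < c then 1 else 0) + (if b < c then 1 else 0)) else 0)
         + q * (P * q ^ A'))) = 0 := by
  have hlt : ∀ x y : Fin N, (x < y) = (x.val < y.val) := fun x y => propext (Fin.lt_def ..)
  have hne : ∀ x y : Fin N, (x ≠ y) = (x.val ≠ y.val) := fun x y =>
    propext (not_congr Fin.ext_iff)
  have h0 := qident q P a.val b.val c.val ((hne a b) ▸ hab) A A' (by simp only [hlt] at hAA; exact hAA)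
  simp only [hlt, hne] at h0 ⊢
  exact h0

lemma card_filter_prod_singleton {N : ℕ} (a b : Fin N) :
    ((({a} : Finset (Fin N)) ×ˢ ({b} : Finset (Fin N))).filter fun ab => ab.1 < ab.2).card
      = if a < b then 1 else 0 := by
  rw [Finset.singleton_product_singleton, Finset.filter_singleton]
  split <;> simp

section Aux
open scoped Classical

lemma mem_verts_iff (n : ℕ) (hn : 1 ≤ n) (v : ℕ) :
    v ∈ verts n (Finset.Icc 1 (n-1)) ↔ 1 ≤ v ∧ v ≤ n := by
  simp only [verts, Finset.mem_insert, Finset.mem_Icc]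
  omega

lemma wt_eq_one (n : ℕ) (hn : 1 ≤ n) (v : ℕ)
    (hv : v ∈ verts n (Finset.Icc 1 (n-1))) : wt n (Finset.Icc 1 (n-1)) v = 1 := by
  rw [mem_verts_iff n hn] at hv
  have hsup : ((verts n (Finset.Icc 1 (n-1))).filter (fun u => u < v)).sup id = v - 1 := by
    rcases Nat.eq_or_lt_of_le hv.1 with h1 | h1
    · have : (verts n (Finset.Icc 1 (n-1))).filter (fun u => u < v) = ∅ := by
        rw [Finset.filter_eq_empty_iff]
        intro u hu
        rw [mem_verts_iff n hn] at hu
        omega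
      simp [this]
      omega
    · apply le_antisymm
      · apply Finset.sup_le
        intro u hu
        rw [Finset.mem_filter, mem_verts_iff n hn] at hu
        simp only [id]
        omega
      · apply Finset.le_sup (f := id) (b := v - 1)
        rw [Finset.mem_filter, mem_verts_iff n hn]
        omega
  rw [wt, hsup]
  omega

lemma edge_h_iff (h : ℕ → ℕ) (j : ℕ) (hval : h (j + 1) = h j + 1) (hgt : j < h j)
    (v u : ℕ) :
    (v < u ∧ u ≤ h v) ↔
      (v < u ∧ u ≤ Function.update h (j + 1) (h j) v) ∨ (v = j + 1 ∧ u = h j + 1) := by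
  by_cases hv : v = j + 1
  · subst hv
    rw [Function.update_self, hval]
    omega
  · rw [Function.update_of_ne hv]
    omega

lemma edge_p_iff (h : ℕ → ℕ) (j : ℕ) (hval : h (j + 1) = h j + 1) (hgt : j < h j)
    (v u : ℕ) :
    (v < u ∧ u ≤ Function.update h j (h j + 1) v) ↔
      (v < u ∧ u ≤ Function.update h (j + 1) (h j) v) ∨ (v = j + 1 ∧ u = h j + 1)
        ∨ (v = j ∧ u = h j + 1) := by
  by_cases hv : v = j + 1
  · subst hv
    rw [Function.update_of_ne (by omega), Function.update_self, hval]
    omega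
  · by_cases hv' : v = j
    · subst hv'
      rw [Function.update_self, Function.update_of_ne (by omega)]
      omega
    · rw [Function.update_of_ne hv', Function.update_of_ne hv]
      omega

lemma edge_swap_nat (h : ℕ → ℕ) (j : ℕ) (hval : h (j + 1) = h j + 1) (hgt : j < h j)
    (v u : ℕ) (hhv : h v ≠ j)
    (hne : ¬(v = j ∧ u = j + 1)) (hne' : ¬(v = j + 1 ∧ u = j)) :
    (v < u ∧ u ≤ Function.update h (j + 1) (h j) v) ↔
      ((if v = j then j + 1 else if v = j + 1 then j else v) <
        (if u = j then j + 1 else if u = j + 1 then j else u) ∧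
       (if u = j then j + 1 else if u = j + 1 then j else u) ≤
        Function.update h (j + 1) (h j) (if v = j then j + 1 else if v = j + 1 then j else v)) := by
  by_cases hvj : v = j <;> by_cases hvj1 : v = j + 1 <;>
    by_cases huj : u = j <;> by_cases huj1 : u = j + 1 <;>
    simp only [hvj, hvj1, huj, huj1, if_pos, if_neg, Function.update_apply] <;>
    simp_all <;> first | omega | (split_ifs <;> omega)

variable {n : ℕ} {h : ℕ → ℕ} {j N : ℕ}

local notation "V" => {x // x ∈ verts n (Finset.Icc 1 (n-1))}

/-- `asc` of `h` versus `asc` of `h⁻`. -/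
lemma asc_h_eq (hval : h (j + 1) = h j + 1) (hgt : j < h j)
    (vj1 vm : V) (hvj1 : vj1.val = j + 1) (hvm : vm.val = h j + 1)
    (γ : V → Finset (Fin N)) :
    asc n (Finset.Icc 1 (n-1)) h γ
      = asc n (Finset.Icc 1 (n-1)) (Function.update h (j+1) (h j)) γ
        + ((γ vj1 ×ˢ γ vm).filter fun ab => ab.1 < ab.2).card := by
  have key : ∀ v u : V,
      (if v.val < u.val ∧ u.val ≤ h v.val then
        ((γ v ×ˢ γ u).filter fun ab => ab.1 < ab.2).card else 0)
      = (if v.val < u.val ∧ u.val ≤ Function.update h (j+1) (h j) v.val then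
          ((γ v ×ˢ γ u).filter fun ab => ab.1 < ab.2).card else 0)
        + (if u = vm then (if v = vj1 then
            ((γ vj1 ×ˢ γ vm).filter fun ab => ab.1 < ab.2).card else 0) else 0) := by
    intro v u
    by_cases hsp : v = vj1 ∧ u = vm
    · obtain ⟨rfl, rfl⟩ := hsp
      rw [if_pos (by rw [hvj1, hvm, hval]; omega),
        if_neg (by rw [hvj1, hvm, Function.update_self]; omega),
        if_pos rfl, if_pos rfl, zero_add]
    · have h2 : (if u = vm then (if v = vj1 then
          ((γ vj1 ×ˢ γ vm).filter fun ab => ab.1 < ab.2).card else 0) else 0) = 0 := by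
        by_cases h3 : u = vm <;> by_cases h4 : v = vj1 <;> simp_all
      rw [h2, add_zero]
      refine if_congr ?_ rfl rfl
      rw [edge_h_iff h j hval hgt]
      refine or_iff_left fun hsp' => hsp ⟨Subtype.ext (by rw [hvj1]; exact hsp'.1),
        Subtype.ext (by rw [hvm]; exact hsp'.2)⟩
  calc asc n (Finset.Icc 1 (n-1)) h γ
      = ∑ v : V, ∑ u : V,
        ((if v.val < u.val ∧ u.val ≤ Function.update h (j+1) (h j) v.val then
          ((γ v ×ˢ γ u).filter fun ab => ab.1 < ab.2).card else 0)
        + (if u = vm then (if v = vj1 then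
            ((γ vj1 ×ˢ γ vm).filter fun ab => ab.1 < ab.2).card else 0) else 0)) :=
        Finset.sum_congr rfl fun v _ => Finset.sum_congr rfl fun u _ => key v u
    _ = _ := by
        simp only [Finset.sum_add_distrib]
        congr 1
        simp [Finset.sum_ite_eq', Finset.sum_ite_eq]


/-- `asc` of `h⁺` versus `asc` of `h⁻`. -/
lemma asc_p_eq (hval : h (j + 1) = h j + 1) (hgt : j < h j)
    (vj vj1 vm : V) (hvj : vj.val = j) (hvj1 : vj1.val = j + 1) (hvm : vm.val = h j + 1)
    (γ : V → Finset (Fin N)) :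
    asc n (Finset.Icc 1 (n-1)) (Function.update h j (h j + 1)) γ
      = asc n (Finset.Icc 1 (n-1)) (Function.update h (j+1) (h j)) γ
        + ((γ vj1 ×ˢ γ vm).filter fun ab => ab.1 < ab.2).card
        + ((γ vj ×ˢ γ vm).filter fun ab => ab.1 < ab.2).card := by
  have hne : vj ≠ vj1 := fun hh => by rw [Subtype.ext_iff, hvj, hvj1] at hh; omega
  have key : ∀ v u : V,
      (if v.val < u.val ∧ u.val ≤ Function.update h j (h j + 1) v.val then
        ((γ v ×ˢ γ u).filter fun ab => ab.1 < ab.2).card else 0)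
      = (if v.val < u.val ∧ u.val ≤ Function.update h (j+1) (h j) v.val then
          ((γ v ×ˢ γ u).filter fun ab => ab.1 < ab.2).card else 0)
        + ((if u = vm then (if v = vj1 then
            ((γ vj1 ×ˢ γ vm).filter fun ab => ab.1 < ab.2).card else 0) else 0)
          + (if u = vm then (if v = vj then
            ((γ vj ×ˢ γ vm).filter fun ab => ab.1 < ab.2).card else 0) else 0)) := by
    intro v u
    by_cases hsp : v = vj1 ∧ u = vm
    · obtain ⟨rfl, rfl⟩ := hsp
      rw [if_pos (by rw [hvj1, hvm, Function.update_of_ne (by omega), hval]; omega),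
        if_neg (by rw [hvj1, hvm, Function.update_self]; omega),
        if_pos rfl, if_pos rfl, if_pos rfl, if_neg (Ne.symm hne), zero_add, add_zero]
    · by_cases hsp' : v = vj ∧ u = vm
      · obtain ⟨rfl, rfl⟩ := hsp'
        rw [if_pos (by rw [hvj, hvm, Function.update_self]; omega),
          if_neg (by rw [hvj, hvm, Function.update_of_ne (by omega)]; omega),
          if_pos rfl, if_pos rfl, if_pos rfl, if_neg hne, zero_add, zero_add]
      · have h2 : (if u = vm then (if v = vj1 then
            ((γ vj1 ×ˢ γ vm).filter fun ab => ab.1 < ab.2).card else 0) else 0) = 0 := by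
          by_cases h3 : u = vm <;> by_cases h4 : v = vj1 <;> simp_all
        have h2' : (if u = vm then (if v = vj then
            ((γ vj ×ˢ γ vm).filter fun ab => ab.1 < ab.2).card else 0) else 0) = 0 := by
          by_cases h3 : u = vm <;> by_cases h4 : v = vj <;> simp_all
        rw [h2, h2', add_zero, add_zero]
        refine if_congr ?_ rfl rfl
        rw [edge_p_iff h j hval hgt]
        constructor
        · rintro (hh | hh | hh)
          · exact hh
          · exact absurd ⟨Subtype.ext (by rw [hvj1]; exact hh.1),
              Subtype.ext (by rw [hvm]; exact hh.2)⟩ hsp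
          · exact absurd ⟨Subtype.ext (by rw [hvj]; exact hh.1),
              Subtype.ext (by rw [hvm]; exact hh.2)⟩ hsp'
        · exact fun hh => Or.inl hh
  calc asc n (Finset.Icc 1 (n-1)) (Function.update h j (h j + 1)) γ
      = ∑ v : V, ∑ u : V,
        ((if v.val < u.val ∧ u.val ≤ Function.update h (j+1) (h j) v.val then
          ((γ v ×ˢ γ u).filter fun ab => ab.1 < ab.2).card else 0)
        + ((if u = vm then (if v = vj1 then
            ((γ vj1 ×ˢ γ vm).filter fun ab => ab.1 < ab.2).card else 0) else 0)
          + (if u = vm then (if v = vj then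
            ((γ vj ×ˢ γ vm).filter fun ab => ab.1 < ab.2).card else 0) else 0))) :=
        Finset.sum_congr rfl fun v _ => Finset.sum_congr rfl fun u _ => key v u
    _ = _ := by
        simp only [Finset.sum_add_distrib]
        rw [add_assoc]
        congr 1
        congr 1
        · simp [Finset.sum_ite_eq', Finset.sum_ite_eq]
        · simp [Finset.sum_ite_eq', Finset.sum_ite_eq]

/-- Properness for `h` versus `h⁻`. -/
lemma proper_h_iff (hval : h (j + 1) = h j + 1) (hgt : j < h j)
    (vj1 vm : V) (hvj1 : vj1.val = j + 1) (hvm : vm.val = h j + 1)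
    (γ : V → Finset (Fin N)) :
    IsProper n (Finset.Icc 1 (n-1)) h γ ↔
      IsProper n (Finset.Icc 1 (n-1)) (Function.update h (j+1) (h j)) γ
        ∧ Disjoint (γ vj1) (γ vm) := by
  constructor
  · intro hp
    refine ⟨⟨hp.1, fun v u h1 h2 => hp.2 v u h1 ?_⟩, hp.2 vj1 vm (by omega) ?_⟩
    · exact ((edge_h_iff h j hval hgt v.val u.val).mpr (Or.inl ⟨h1, h2⟩)).2
    · rw [hvj1, hvm, hval]
  · rintro ⟨hp, hd⟩
    refine ⟨hp.1, fun v u h1 h2 => ?_⟩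
    rcases (edge_h_iff h j hval hgt v.val u.val).mp ⟨h1, h2⟩ with hh | hh
    · exact hp.2 v u hh.1 hh.2
    · obtain rfl : v = vj1 := Subtype.ext (by rw [hvj1]; exact hh.1)
      obtain rfl : u = vm := Subtype.ext (by rw [hvm]; exact hh.2)
      exact hd

/-- Properness for `h⁺` versus `h⁻`. -/
lemma proper_p_iff (hval : h (j + 1) = h j + 1) (hgt : j < h j)
    (vj vj1 vm : V) (hvj : vj.val = j) (hvj1 : vj1.val = j + 1) (hvm : vm.val = h j + 1)
    (γ : V → Finset (Fin N)) :
    IsProper n (Finset.Icc 1 (n-1)) (Function.update h j (h j + 1)) γ ↔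
      IsProper n (Finset.Icc 1 (n-1)) (Function.update h (j+1) (h j)) γ
        ∧ Disjoint (γ vj1) (γ vm) ∧ Disjoint (γ vj) (γ vm) := by
  constructor
  · intro hp
    refine ⟨⟨hp.1, fun v u h1 h2 => hp.2 v u h1 ?_⟩,
      hp.2 vj1 vm (by omega) ?_, hp.2 vj vm (by omega) ?_⟩
    · exact ((edge_p_iff h j hval hgt v.val u.val).mpr (Or.inl ⟨h1, h2⟩)).2
    · rw [hvj1, hvm, Function.update_of_ne (by omega), hval]
    · rw [hvj, hvm, Function.update_self]
  · rintro ⟨hp, hd1, hd2⟩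
    refine ⟨hp.1, fun v u h1 h2 => ?_⟩
    rcases (edge_p_iff h j hval hgt v.val u.val).mp ⟨h1, h2⟩ with hh | hh | hh
    · exact hp.2 v u hh.1 hh.2
    · obtain rfl : v = vj1 := Subtype.ext (by rw [hvj1]; exact hh.1)
      obtain rfl : u = vm := Subtype.ext (by rw [hvm]; exact hh.2)
      exact hd1
    · obtain rfl : v = vj := Subtype.ext (by rw [hvj]; exact hh.1)
      obtain rfl : u = vm := Subtype.ext (by rw [hvm]; exact hh.2)
      exact hd2


lemma swap_val (vj vj1 : V) (hvj : vj.val = j) (hvj1 : vj1.val = j + 1) (v : V) :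
    ((Equiv.swap vj vj1) v).val
      = (if v.val = j then j + 1 else if v.val = j + 1 then j else v.val) := by
  by_cases h1 : v = vj
  · subst h1
    rw [Equiv.swap_apply_left, if_pos hvj, hvj1]
  · by_cases h2 : v = vj1
    · subst h2
      rw [Equiv.swap_apply_right, if_neg (by rw [hvj1]; omega), if_pos hvj1, hvj]
    · rw [Equiv.swap_apply_of_ne_of_ne h1 h2,
        if_neg (fun e => h1 (Subtype.ext (e.trans hvj.symm))),
        if_neg (fun e => h2 (Subtype.ext (e.trans hvj1.symm)))]

lemma proper_swap_dir (hn : 1 ≤ n) (hval : h (j + 1) = h j + 1) (hgt : j < h j)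
    (hempty : ∀ i ∈ Finset.Icc 1 n, h i ≠ j)
    (vj vj1 : V) (hvj : vj.val = j) (hvj1 : vj1.val = j + 1)
    (γ : V → Finset (Fin N))
    (hp : IsProper n (Finset.Icc 1 (n-1)) (Function.update h (j+1) (h j)) γ) :
    IsProper n (Finset.Icc 1 (n-1)) (Function.update h (j+1) (h j))
      (γ ∘ Equiv.swap vj vj1) := by
  constructor
  · intro v
    have e1 := hp.1 ((Equiv.swap vj vj1) v)
    rw [wt_eq_one n hn _ ((Equiv.swap vj vj1) v).2] at e1
    rw [Function.comp_apply, e1, wt_eq_one n hn _ v.2]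
  · intro v u h1 h2
    by_cases hc1 : v = vj ∧ u = vj1
    · obtain ⟨e1, e2⟩ := hc1
      rw [e1, e2, Function.comp_apply, Function.comp_apply, Equiv.swap_apply_left,
        Equiv.swap_apply_right]
      exact (hp.2 vj vj1 (by omega)
        (by rw [hvj, hvj1, Function.update_of_ne (by omega : j ≠ j + 1)]; omega)).symm
    · by_cases hc2 : v = vj1 ∧ u = vj
      · exfalso
        rw [hc2.1, hc2.2, hvj, hvj1] at h1
        omega
      · have hmem : v.val ∈ Finset.Icc 1 n := by
          have := v.2; rw [mem_verts_iff n hn] at this; rw [Finset.mem_Icc]; omega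
        have hne1 : ¬(v.val = j ∧ u.val = j + 1) := fun e =>
          hc1 ⟨Subtype.ext (e.1.trans hvj.symm), Subtype.ext (e.2.trans hvj1.symm)⟩
        have hne2 : ¬(v.val = j + 1 ∧ u.val = j) := fun e =>
          hc2 ⟨Subtype.ext (e.1.trans hvj1.symm), Subtype.ext (e.2.trans hvj.symm)⟩
        have hiff := edge_swap_nat h j hval hgt v.val u.val (hempty v.val hmem) hne1 hne2
        obtain ⟨e1, e2⟩ := hiff.mp ⟨h1, h2⟩
        refine hp.2 ((Equiv.swap vj vj1) v) ((Equiv.swap vj vj1) u) ?_ ?_ <;>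
          rw [swap_val vj vj1 hvj hvj1, swap_val vj vj1 hvj hvj1]
        · exact e1
        · exact e2

lemma sum_swap_helper (vj vj1 : V) (F : V → V → ℕ) :
    ∑ v : V, ∑ u : V, F ((Equiv.swap vj vj1) v) ((Equiv.swap vj vj1) u)
      = ∑ v : V, ∑ u : V, F v u := by
  calc ∑ v : V, ∑ u : V, F ((Equiv.swap vj vj1) v) ((Equiv.swap vj vj1) u)
      = ∑ v : V, ∑ u : V, F v ((Equiv.swap vj vj1) u) :=
        Equiv.sum_comp (Equiv.swap vj vj1) (fun v => ∑ u : V, F v ((Equiv.swap vj vj1) u))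
    _ = ∑ v : V, ∑ u : V, F v u :=
        Finset.sum_congr rfl fun v _ => Equiv.sum_comp (Equiv.swap vj vj1) (F v)

lemma asc_swap (hn : 1 ≤ n) (hval : h (j + 1) = h j + 1) (hgt : j < h j)
    (hempty : ∀ i ∈ Finset.Icc 1 n, h i ≠ j)
    (vj vj1 : V) (hvj : vj.val = j) (hvj1 : vj1.val = j + 1)
    (γ : V → Finset (Fin N)) :
    asc n (Finset.Icc 1 (n-1)) (Function.update h (j+1) (h j)) (γ ∘ Equiv.swap vj vj1)
        + ((γ vj ×ˢ γ vj1).filter fun ab => ab.1 < ab.2).card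
      = asc n (Finset.Icc 1 (n-1)) (Function.update h (j+1) (h j)) γ
        + ((γ vj1 ×ˢ γ vj).filter fun ab => ab.1 < ab.2).card := by
  have hvne : vj ≠ vj1 := fun hh => by rw [Subtype.ext_iff, hvj, hvj1] at hh; omega
  have h0 : asc n (Finset.Icc 1 (n-1)) (Function.update h (j+1) (h j)) (γ ∘ Equiv.swap vj vj1)
      = ∑ v : V, ∑ u : V,
        (if ((Equiv.swap vj vj1) v).val < ((Equiv.swap vj vj1) u).val ∧ ((Equiv.swap vj vj1) u).val ≤ Function.update h (j+1) (h j) ((Equiv.swap vj vj1) v).val then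
          ((γ v ×ˢ γ u).filter fun ab => ab.1 < ab.2).card else 0) := by
    rw [← sum_swap_helper vj vj1 (fun v u =>
      if ((Equiv.swap vj vj1) v).val < ((Equiv.swap vj vj1) u).val ∧ ((Equiv.swap vj vj1) u).val ≤ Function.update h (j+1) (h j) ((Equiv.swap vj vj1) v).val then
        ((γ v ×ˢ γ u).filter fun ab => ab.1 < ab.2).card else 0)]
    refine Finset.sum_congr rfl fun v _ => Finset.sum_congr rfl fun u _ => ?_
    simp only [Function.update_apply, Equiv.swap_apply_self, Function.comp_apply]
  have key : ∀ v u : V,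
      (if ((Equiv.swap vj vj1) v).val < ((Equiv.swap vj vj1) u).val ∧ ((Equiv.swap vj vj1) u).val ≤ Function.update h (j+1) (h j) ((Equiv.swap vj vj1) v).val then
        ((γ v ×ˢ γ u).filter fun ab => ab.1 < ab.2).card else 0)
      + (if u = vj1 then (if v = vj then
          ((γ vj ×ˢ γ vj1).filter fun ab => ab.1 < ab.2).card else 0) else 0)
      = (if v.val < u.val ∧ u.val ≤ Function.update h (j+1) (h j) v.val then
          ((γ v ×ˢ γ u).filter fun ab => ab.1 < ab.2).card else 0)
      + (if u = vj then (if v = vj1 then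
          ((γ vj1 ×ˢ γ vj).filter fun ab => ab.1 < ab.2).card else 0) else 0) := by
    intro v u
    by_cases hc1 : v = vj ∧ u = vj1
    · rw [hc1.1, hc1.2]
      rw [if_neg, if_pos rfl, if_pos rfl, if_pos, if_neg (Ne.symm hvne), add_zero, zero_add]
      · refine ⟨by rw [hvj, hvj1]; omega, ?_⟩
        rw [hvj, hvj1, Function.update_of_ne (by omega : j ≠ j + 1)]
        omega
      · rw [Equiv.swap_apply_left, Equiv.swap_apply_right, hvj, hvj1]
        omega
    · by_cases hc2 : v = vj1 ∧ u = vj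
      · rw [hc2.1, hc2.2]
        have e1 : ((Equiv.swap vj vj1) vj1).val = j := by rw [Equiv.swap_apply_right, hvj]
        have e2 : ((Equiv.swap vj vj1) vj).val = j + 1 := by rw [Equiv.swap_apply_left, hvj1]
        rw [if_pos (by rw [e1, e2, Function.update_of_ne (by omega : j ≠ j + 1)]; omega),
          if_neg hvne,
          if_neg (fun hc => by rw [hvj, hvj1] at hc; omega),
          if_pos rfl, if_pos rfl, add_zero, zero_add]
      · have h2 : (if u = vj1 then (if v = vj then
            ((γ vj ×ˢ γ vj1).filter fun ab => ab.1 < ab.2).card else 0) else 0) = 0 := by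
          by_cases h3 : u = vj1 <;> by_cases h4 : v = vj <;> simp_all
        have h2' : (if u = vj then (if v = vj1 then
            ((γ vj1 ×ˢ γ vj).filter fun ab => ab.1 < ab.2).card else 0) else 0) = 0 := by
          by_cases h3 : u = vj <;> by_cases h4 : v = vj1 <;> simp_all
        rw [h2, h2', add_zero, add_zero]
        refine if_congr ?_ rfl rfl
        have hmem : v.val ∈ Finset.Icc 1 n := by
          have := v.2; rw [mem_verts_iff n hn] at this; rw [Finset.mem_Icc]; omega
        have hne1 : ¬(v.val = j ∧ u.val = j + 1) := fun e =>
          hc1 ⟨Subtype.ext (e.1.trans hvj.symm), Subtype.ext (e.2.trans hvj1.symm)⟩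
        have hne2 : ¬(v.val = j + 1 ∧ u.val = j) := fun e =>
          hc2 ⟨Subtype.ext (e.1.trans hvj1.symm), Subtype.ext (e.2.trans hvj.symm)⟩
        rw [swap_val vj vj1 hvj hvj1, swap_val vj vj1 hvj hvj1]
        exact (edge_swap_nat h j hval hgt v.val u.val (hempty v.val hmem) hne1 hne2).symm
  have sums := Finset.sum_congr rfl fun (v : V) (_ : v ∈ Finset.univ) =>
    Finset.sum_congr rfl fun (u : V) (_ : u ∈ Finset.univ) => key v u
  simp only [Finset.sum_add_distrib] at sums
  rw [h0]
  convert sums using 2 <;> simp [Finset.sum_ite_eq', Finset.sum_ite_eq, asc]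

end Aux

/-- Proposition 64(2), eq. (70), the modular law (second case):
`(1+q) csf(h) = csf(h⁺) + q csf(h⁻)` where `h⁺ j = h j + 1`, `h⁻ (j+1) = h j`. -/
theorem csf_modular_law_two (n : ℕ) (h : ℕ → ℕ)
    (hgen : IsGenHess n (Finset.Icc 1 (n - 1)) h)
    (j : ℕ) (hj1 : 1 ≤ j) (hjn : j < n)
    (hval : h (j + 1) = h j + 1) (hgt : j < h j)
    (hempty : ∀ i ∈ Finset.Icc 1 n, h i ≠ j)
    (N : ℕ) (hN : 1 ≤ N) :
    (1 + Polynomial.X) * csf n (Finset.Icc 1 (n - 1)) h N =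
      csf n (Finset.Icc 1 (n - 1)) (Function.update h j (h j + 1)) N +
      Polynomial.X * csf n (Finset.Icc 1 (n - 1)) (Function.update h (j + 1) (h j)) N := by
  have hn : 1 ≤ n := by omega
  have hmn : h j + 1 ≤ n := by
    have h1 : (j + 1) ∈ verts n (Finset.Icc 1 (n - 1)) :=
      (mem_verts_iff n hn _).mpr ⟨by omega, by omega⟩
    have h2 := hgen.2.1 (j + 1) h1
    rw [mem_verts_iff n hn, hval] at h2
    omega
  set vj : {x // x ∈ verts n (Finset.Icc 1 (n - 1))} :=
    ⟨j, (mem_verts_iff n hn j).mpr ⟨hj1, by omega⟩⟩ with hvjdef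
  set vj1 : {x // x ∈ verts n (Finset.Icc 1 (n - 1))} :=
    ⟨j + 1, (mem_verts_iff n hn _).mpr ⟨by omega, by omega⟩⟩ with hvj1def
  set vm : {x // x ∈ verts n (Finset.Icc 1 (n - 1))} :=
    ⟨h j + 1, (mem_verts_iff n hn _).mpr ⟨by omega, hmn⟩⟩ with hvmdef
  have hvj : vj.val = j := rfl
  have hvj1 : vj1.val = j + 1 := rfl
  have hvm : vm.val = h j + 1 := rfl
  have hedge : vj1.val ≤ Function.update h (j+1) (h j) vj.val := by
    rw [hvj, hvj1, Function.update_of_ne (by omega : j ≠ j + 1)]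
    omega
  rw [csf, csf, csf, Finset.sum_filter, Finset.sum_filter, Finset.sum_filter,
    Finset.mul_sum, Finset.mul_sum, ← Finset.sum_add_distrib, ← sub_eq_zero,
    ← Finset.sum_sub_distrib]
  apply Finset.sum_ninvolution (fun γ => γ ∘ Equiv.swap vj vj1)
  · -- main identity
    intro γ
    by_cases hp : IsProper n (Finset.Icc 1 (n-1)) (Function.update h (j+1) (h j)) γ
    · have card1 : ∀ v, (γ v).card = 1 := fun v => by
        rw [hp.1 v]; exact wt_eq_one n hn _ v.2
      obtain ⟨a, ha⟩ := Finset.card_eq_one.mp (card1 vj)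
      obtain ⟨b, hb⟩ := Finset.card_eq_one.mp (card1 vj1)
      obtain ⟨c, hc⟩ := Finset.card_eq_one.mp (card1 vm)
      have hab : a ≠ b := by
        have hd := hp.2 vj vj1 (by rw [hvj, hvj1]; omega) hedge
        rw [ha, hb, Finset.disjoint_singleton] at hd
        exact hd
      have hσm : (Equiv.swap vj vj1) vm = vm :=
        Equiv.swap_apply_of_ne_of_ne
          (fun e => by rw [Subtype.ext_iff, hvm, hvj] at e; omega)
          (fun e => by rw [Subtype.ext_iff, hvm, hvj1] at e; omega)
      have hsj : (γ ∘ Equiv.swap vj vj1) vj = {b} := by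
        rw [Function.comp_apply, Equiv.swap_apply_left, hb]
      have hsj1 : (γ ∘ Equiv.swap vj vj1) vj1 = {a} := by
        rw [Function.comp_apply, Equiv.swap_apply_right, ha]
      have hsm : (γ ∘ Equiv.swap vj vj1) vm = {c} := by
        rw [Function.comp_apply, hσm, hc]
      have hpσ := proper_swap_dir hn hval hgt hempty vj vj1 hvj hvj1 γ hp
      have hT : (∏ v, ∏ x ∈ (γ ∘ Equiv.swap vj vj1) v, MvPolynomial.X (R := ℤ) x)
          = ∏ v, ∏ x ∈ γ v, MvPolynomial.X x :=
        Equiv.prod_comp (Equiv.swap vj vj1) (fun v => ∏ x ∈ γ v, MvPolynomial.X x)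
      have hAA := asc_swap hn hval hgt hempty vj vj1 hvj hvj1 γ
      rw [ha, hb, card_filter_prod_singleton, card_filter_prod_singleton] at hAA
      simp only [proper_h_iff hval hgt vj1 vm hvj1 hvm,
        proper_p_iff hval hgt vj vj1 vm hvj hvj1 hvm,
        asc_h_eq hval hgt vj1 vm hvj1 hvm,
        asc_p_eq hval hgt vj vj1 vm hvj hvj1 hvm,
        hsj, hsj1, hsm, ha, hb, hc, hT, hp, hpσ, true_and, and_true, if_true, ite_true,
        Finset.disjoint_singleton, card_filter_prod_singleton]
      exact qidentF Polynomial.X _ a b c hab _ _ hAA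
    · have hc3 : (γ ∘ Equiv.swap vj vj1) ∘ Equiv.swap vj vj1 = γ :=
        funext fun x => by simp [Function.comp, Equiv.swap_apply_self]
      have hpσn : ¬ IsProper n (Finset.Icc 1 (n-1)) (Function.update h (j+1) (h j))
          (γ ∘ Equiv.swap vj vj1) := fun hh => hp (by
        have h2 := proper_swap_dir hn hval hgt hempty vj vj1 hvj hvj1 _ hh
        rwa [hc3] at h2)
      have k1 : ¬ IsProper n (Finset.Icc 1 (n-1)) h γ := fun hh =>
        hp ((proper_h_iff hval hgt vj1 vm hvj1 hvm γ).mp hh).1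
      have k2 : ¬ IsProper n (Finset.Icc 1 (n-1)) (Function.update h j (h j + 1)) γ :=
        fun hh => hp ((proper_p_iff hval hgt vj vj1 vm hvj hvj1 hvm γ).mp hh).1
      have k1σ : ¬ IsProper n (Finset.Icc 1 (n-1)) h (γ ∘ Equiv.swap vj vj1) := fun hh =>
        hpσn ((proper_h_iff hval hgt vj1 vm hvj1 hvm _).mp hh).1
      have k2σ : ¬ IsProper n (Finset.Icc 1 (n-1)) (Function.update h j (h j + 1))
          (γ ∘ Equiv.swap vj vj1) := fun hh =>
        hpσn ((proper_p_iff hval hgt vj vj1 vm hvj hvj1 hvm _).mp hh).1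
      simp [hp, hpσn, k1, k2, k1σ, k2σ]
  · -- g ≠ id on support
    intro γ hF heq
    apply hF
    by_cases hp : IsProper n (Finset.Icc 1 (n-1)) (Function.update h (j+1) (h j)) γ
    · exfalso
      have hd := hp.2 vj vj1 (by rw [hvj, hvj1]; omega) hedge
      have he : γ vj1 = γ vj := by
        have h2 := congrFun heq vj
        rwa [Function.comp_apply, Equiv.swap_apply_left] at h2
      rw [he, disjoint_self] at hd
      have h3 := hp.1 vj
      rw [hd, wt_eq_one n hn _ vj.2] at h3
      simp at h3
    · have k1 : ¬ IsProper n (Finset.Icc 1 (n-1)) h γ := fun hh =>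
        hp ((proper_h_iff hval hgt vj1 vm hvj1 hvm γ).mp hh).1
      have k2 : ¬ IsProper n (Finset.Icc 1 (n-1)) (Function.update h j (h j + 1)) γ :=
        fun hh => hp ((proper_p_iff hval hgt vj vj1 vm hvj hvj1 hvm γ).mp hh).1
      simp [hp, k1, k2]
  · exact fun γ => Finset.mem_univ _
  · intro γ
    funext x
    simp [Function.comp, Equiv.swap_apply_self]
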